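/- Wasserstein-1 distance on the real line as the L¹ distance of CDFs: for two finitely-supported probability measures ν₀, ν₁ on ℝ with cumulative distribution functions F₀ and F₁, the Mass Transportation Distance with respect to |·−·| satisfies d̂(ν₀, ν₁) = ∫_ℝ |F₀(x) − F₁(x)| dx. -/

import Mathlib

open MeasureTheory Set

lemma step_eq (a b : ℝ) (hab : a ≤ b) :
    (fun x => (if a ≤ x then (1:ℝ) else 0) - (if b ≤ x then 1 else 0))
    = (Set.Ico a b).indicator (fun _ => (1:ℝ)) := by
  funext x
  by_cases h1 : a ≤ x <;> by_cases h2 : b ≤ x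
  · simp [Set.indicator, Set.mem_Ico, h1, h2, not_lt.2 h2]
  · simp [Set.indicator, Set.mem_Ico, h1, h2, not_le.1 h2]
  · exact absurd (hab.trans h2) h1
  · simp [Set.indicator, Set.mem_Ico, h1, h2]

lemma ind_integrable (a b : ℝ) :
    Integrable ((Set.Ico a b).indicator (fun _ => (1:ℝ))) := by
  rw [integrable_indicator_iff measurableSet_Ico]
  exact integrableOn_const (by simp [Real.volume_Ico])

lemma ind_integral (a b : ℝ) (hab : a ≤ b) :
    ∫ x, (Set.Ico a b).indicator (fun _ => (1:ℝ)) x = b - a := by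
  rw [integral_indicator_const _ measurableSet_Ico]
  simp [Real.volume_Ico, ENNReal.toReal_ofReal (sub_nonneg.2 hab), hab]


noncomputable def stepd (a b : ℝ) : ℝ → ℝ :=
  fun x => (if a ≤ x then (1:ℝ) else 0) - (if b ≤ x then 1 else 0)

lemma stepd_swap (a b : ℝ) (x : ℝ) : stepd a b x = -(stepd b a x) := by
  simp only [stepd]; ring

lemma stepd_eq_ind (a b : ℝ) (h : a ≤ b) (x : ℝ) :
    stepd a b x = (Set.Ico a b).indicator (fun _ => (1:ℝ)) x := by
  have := congrFun (step_eq a b h) x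
  simpa [stepd] using this

lemma abs_stepd (a b : ℝ) (h : a ≤ b) (x : ℝ) :
    |stepd a b x| = (Set.Ico a b).indicator (fun _ => (1:ℝ)) x := by
  rw [stepd_eq_ind a b h x]
  rcases Set.indicator_eq_zero_or_self (Set.Ico a b) (fun _ => (1:ℝ)) x with h' | h' <;>
    rw [h'] <;> simp

lemma stepd_integrable (a b : ℝ) : Integrable (stepd a b) := by
  rcases le_total a b with h | h
  · have : stepd a b = (Set.Ico a b).indicator (fun _ => (1:ℝ)) := by
      funext x; exact stepd_eq_ind a b h x
    rw [this]; exact ind_integrable a b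
  · have : stepd a b = fun x => -((Set.Ico b a).indicator (fun _ => (1:ℝ)) x) := by
      funext x
      rw [stepd_swap, stepd_eq_ind b a h x]
    rw [this]
    exact (ind_integrable b a).neg

lemma stepd_abs_integral (a b : ℝ) : ∫ x, |stepd a b x| = |a - b| := by
  rcases le_total a b with h | h
  · have : (fun x => |stepd a b x|) = (Set.Ico a b).indicator (fun _ => (1:ℝ)) := by
      funext x; exact abs_stepd a b h x
    rw [this, ind_integral a b h, abs_sub_comm, abs_of_nonneg (sub_nonneg.2 h)]
  · have : (fun x => |stepd a b x|) = (Set.Ico b a).indicator (fun _ => (1:ℝ)) := by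
      funext x; rw [stepd_swap, abs_neg]; exact abs_stepd b a h x
    rw [this, ind_integral b a h, abs_of_nonneg (sub_nonneg.2 h)]

lemma cdf_diff_eq {w : ℕ} (t p q : Fin w → ℝ) (ν : Fin w → Fin w → ℝ)
    (h1 : ∀ i, ∑ j, ν i j = p i) (h2 : ∀ j, ∑ i, ν i j = q j) (x : ℝ) :
    (∑ i, if t i ≤ x then p i else 0) - (∑ i, if t i ≤ x then q i else 0)
      = ∑ i, ∑ j, ν i j * stepd (t i) (t j) x := by
  simp only [stepd, mul_sub, Finset.sum_sub_distrib]
  congr 1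
  · apply Finset.sum_congr rfl
    intro i _
    rw [← Finset.sum_mul, h1 i, mul_ite, mul_one, mul_zero]
  · rw [Finset.sum_comm]
    apply Finset.sum_congr rfl
    intro j _
    rw [← Finset.sum_mul, h2 j, mul_ite, mul_one, mul_zero]

lemma coupling_sum_integrable {w : ℕ} (t : Fin w → ℝ) (ν : Fin w → Fin w → ℝ) :
    Integrable (fun x => ∑ i, ∑ j, ν i j * stepd (t i) (t j) x) := by
  apply integrable_finset_sum
  intro i _
  apply integrable_finset_sum
  intro j _
  exact (stepd_integrable (t i) (t j)).const_mul _

lemma cost_ge {w : ℕ} (t p q : Fin w → ℝ) (ν : Fin w → Fin w → ℝ)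
    (h0 : ∀ i j, 0 ≤ ν i j)
    (h1 : ∀ i, ∑ j, ν i j = p i) (h2 : ∀ j, ∑ i, ν i j = q j) :
    (∫ x, |(∑ i, if t i ≤ x then p i else 0) - (∑ i, if t i ≤ x then q i else 0)|)
      ≤ ∑ i, ∑ j, |t i - t j| * ν i j := by
  have key : ∑ i, ∑ j, |t i - t j| * ν i j
      = ∫ x, ∑ i, ∑ j, ν i j * |stepd (t i) (t j) x| := by
    rw [integral_finset_sum _ (fun i _ => integrable_finset_sum _
      (fun j _ => ((stepd_integrable (t i) (t j)).abs.const_mul _)))]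
    apply Finset.sum_congr rfl; intro i _
    rw [integral_finset_sum _ (fun j _ => ((stepd_integrable (t i) (t j)).abs.const_mul _))]
    apply Finset.sum_congr rfl; intro j _
    rw [integral_const_mul, stepd_abs_integral, mul_comm]
  rw [key]
  apply integral_mono
  · exact (coupling_sum_integrable t ν).abs.congr
      (by filter_upwards with x using by rw [← cdf_diff_eq t p q ν h1 h2 x])
  · apply integrable_finset_sum; intro i _; apply integrable_finset_sum; intro j _
    exact (stepd_integrable (t i) (t j)).abs.const_mul _
  · intro x
    simp only []
    rw [cdf_diff_eq t p q ν h1 h2 x]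
    calc |∑ i, ∑ j, ν i j * stepd (t i) (t j) x|
        ≤ ∑ i, |∑ j, ν i j * stepd (t i) (t j) x| := Finset.abs_sum_le_sum_abs _ _
      _ ≤ ∑ i, ∑ j, ν i j * |stepd (t i) (t j) x| := by
          apply Finset.sum_le_sum; intro i _
          calc |∑ j, ν i j * stepd (t i) (t j) x|
              ≤ ∑ j, |ν i j * stepd (t i) (t j) x| := Finset.abs_sum_le_sum_abs _ _
            _ = ∑ j, ν i j * |stepd (t i) (t j) x| := by
                apply Finset.sum_congr rfl; intro j _
                rw [abs_mul, abs_of_nonneg (h0 i j)]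

lemma overlap_row_sum (B : ℕ → ℝ) (hB : Monotone B) :
    ∀ (n : ℕ) (a b : ℝ), B 0 ≤ a → a ≤ b → b ≤ B n →
    ∑ j ∈ Finset.range n, max 0 (min b (B (j+1)) - max a (B j)) = b - a := by
  intro n
  induction n with
  | zero =>
    intro a b h0 hab hn
    have : a = b := le_antisymm hab (hn.trans h0)
    simp [this]
  | succ n ih =>
    intro a b h0 hab hn
    rw [Finset.sum_range_succ]
    rcases le_total b (B n) with hb | hb
    · have hlast : max 0 (min b (B (n+1)) - max a (B n)) = 0 :=
        max_eq_left (by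
          have h1 : min b (B (n+1)) ≤ b := min_le_left _ _
          have h2 : b ≤ max a (B n) := hb.trans (le_max_right _ _)
          linarith)
      rw [hlast, ih a b h0 hab hb, add_zero]
    · have hsum : ∀ j ∈ Finset.range n,
          max 0 (min b (B (j+1)) - max a (B j))
            = max 0 (min (B n) (B (j+1)) - max (min a (B n)) (B j)) := by
        intro j hj
        have hjn : j + 1 ≤ n := Finset.mem_range.1 hj
        have hBj1 : B (j+1) ≤ B n := hB hjn
        have hBj : B j ≤ B n := hB (Nat.le_of_succ_le hjn)
        rw [min_eq_right (hBj1.trans hb), min_eq_right hBj1]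
        rcases le_total a (B n) with ha | ha
        · rw [min_eq_left ha]
        · rw [min_eq_right ha]
          rw [max_eq_left (by
            have := le_max_left a (B j)
            linarith [hBj1.trans ha, hBj.trans ha]),
            max_eq_left (by
            have h3 : B n ≤ max (B n) (B j) := le_max_left _ _
            linarith)]
      rw [Finset.sum_congr rfl hsum,
        ih (min a (B n)) (B n) (le_min h0 (hB (Nat.zero_le n))) (min_le_right _ _) le_rfl]
      have hlast : max 0 (min b (B (n+1)) - max a (B n)) = b - max a (B n) := by
        rw [min_eq_left hn]
        exact max_eq_right (by linarith [max_le hab hb])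
      rw [hlast]
      have := min_add_max a (B n)
      linarith

lemma abs_sum_sum_eq {w : ℕ} (g : Fin w → Fin w → ℝ)
    (h : (∀ i j, 0 ≤ g i j) ∨ (∀ i j, g i j ≤ 0)) :
    ∑ i, ∑ j, |g i j| = |∑ i, ∑ j, g i j| := by
  rcases h with h | h
  · rw [abs_of_nonneg (Finset.sum_nonneg fun i _ => Finset.sum_nonneg fun j _ => h i j)]
    exact Finset.sum_congr rfl fun i _ => Finset.sum_congr rfl fun j _ => abs_of_nonneg (h i j)
  · rw [abs_of_nonpos (Finset.sum_nonpos fun i _ => Finset.sum_nonpos fun j _ => h i j)]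
    rw [← Finset.sum_neg_distrib]
    apply Finset.sum_congr rfl; intro i _
    rw [← Finset.sum_neg_distrib]
    exact Finset.sum_congr rfl fun j _ => abs_of_nonpos (h i j)

lemma exists_optimal_sorted {w : ℕ} (t p q : Fin w → ℝ) (ht : Monotone t)
    (hp : ∀ i, 0 ≤ p i) (hq : ∀ i, 0 ≤ q i)
    (hps : ∑ i, p i = 1) (hqs : ∑ i, q i = 1) :
    ∃ ν : Fin w → Fin w → ℝ,
      (∀ i j, 0 ≤ ν i j) ∧ (∀ i, ∑ j, ν i j = p i) ∧ (∀ j, ∑ i, ν i j = q j) ∧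
      ∑ i, ∑ j, |t i - t j| * ν i j
        = ∫ x, |(∑ i, if t i ≤ x then p i else 0) - (∑ i, if t i ≤ x then q i else 0)| := by
  classical
  set pp : ℕ → ℝ := fun n => if h : n < w then p ⟨n, h⟩ else 0 with hpp_def
  set qq : ℕ → ℝ := fun n => if h : n < w then q ⟨n, h⟩ else 0 with hqq_def
  have hpp0 : ∀ n, 0 ≤ pp n := by
    intro n; rw [hpp_def]; dsimp only; split
    · exact hp _
    · exact le_rfl
  have hqq0 : ∀ n, 0 ≤ qq n := by
    intro n; rw [hqq_def]; dsimp only; split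
    · exact hq _
    · exact le_rfl
  set A : ℕ → ℝ := fun k => ∑ n ∈ Finset.range k, pp n with hA_def
  set B : ℕ → ℝ := fun k => ∑ n ∈ Finset.range k, qq n with hB_def
  have hA_mono : Monotone A := fun k l hkl =>
    Finset.sum_le_sum_of_subset_of_nonneg (Finset.range_subset_range.2 hkl) (fun n _ _ => hpp0 n)
  have hB_mono : Monotone B := fun k l hkl =>
    Finset.sum_le_sum_of_subset_of_nonneg (Finset.range_subset_range.2 hkl) (fun n _ _ => hqq0 n)
  have hA0 : A 0 = 0 := by rw [hA_def]; simp
  have hB0 : B 0 = 0 := by rw [hB_def]; simp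
  have hppi : ∀ i : Fin w, pp ↑i = p i := by
    intro i; rw [hpp_def]; simp [i.isLt]
  have hqqi : ∀ i : Fin w, qq ↑i = q i := by
    intro i; rw [hqq_def]; simp [i.isLt]
  have hAw : A w = 1 := by
    rw [hA_def]; dsimp only
    rw [← Fin.sum_univ_eq_sum_range pp w, ← hps]
    exact Finset.sum_congr rfl fun i _ => hppi i
  have hBw : B w = 1 := by
    rw [hB_def]; dsimp only
    rw [← Fin.sum_univ_eq_sum_range qq w, ← hqs]
    exact Finset.sum_congr rfl fun i _ => hqqi i
  have hA_nonneg : ∀ k, 0 ≤ A k := fun k => hA0 ▸ hA_mono (Nat.zero_le k)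
  have hB_nonneg : ∀ k, 0 ≤ B k := fun k => hB0 ▸ hB_mono (Nat.zero_le k)
  have hA_step : ∀ i : Fin w, A (↑i + 1) = A ↑i + p i := by
    intro i; rw [hA_def]; dsimp only; rw [Finset.sum_range_succ, hppi i]
  have hB_step : ∀ j : Fin w, B (↑j + 1) = B ↑j + q j := by
    intro j; rw [hB_def]; dsimp only; rw [Finset.sum_range_succ, hqqi j]
  set f : Fin w → Fin w → ℝ :=
    fun i j => max 0 (min (A (↑i + 1)) (B (↑j + 1)) - max (A ↑i) (B ↑j)) with hf_def
  have hf0 : ∀ i j, 0 ≤ f i j := fun i j => le_max_left _ _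
  have hfrow : ∀ i, ∑ j, f i j = p i := by
    intro i
    have := Fin.sum_univ_eq_sum_range
      (fun n => max 0 (min (A (↑i + 1)) (B (n + 1)) - max (A ↑i) (B n))) w
    rw [hf_def]; dsimp only
    rw [this, overlap_row_sum B hB_mono w (A ↑i) (A (↑i + 1))
      (hB0 ▸ hA_nonneg ↑i) (hA_mono (Nat.le_succ ↑i)) (by rw [hBw, ← hAw]; exact hA_mono i.isLt),
      hA_step i]
    ring
  have hfcol : ∀ j, ∑ i, f i j = q j := by
    intro j
    have h1 : ∀ i : Fin w, f i j
        = max 0 (min (B (↑j + 1)) (A (↑i + 1)) - max (B ↑j) (A ↑i)) := by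
      intro i; rw [hf_def]; dsimp only; rw [min_comm (A (↑i + 1)), max_comm (A ↑i)]
    rw [Finset.sum_congr rfl fun i _ => h1 i]
    have := Fin.sum_univ_eq_sum_range
      (fun n => max 0 (min (B (↑j + 1)) (A (n + 1)) - max (B ↑j) (A n))) w
    rw [this, overlap_row_sum A hA_mono w (B ↑j) (B (↑j + 1))
      (hA0 ▸ hB_nonneg ↑j) (hB_mono (Nat.le_succ ↑j)) (by rw [hAw, ← hBw]; exact hB_mono j.isLt),
      hB_step j]
    ring
  have hpos : ∀ i j : Fin w, 0 < f i j →
      max (A ↑i) (B ↑j) < min (A (↑i + 1)) (B (↑j + 1)) := by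
    intro i j h
    rw [hf_def] at h; dsimp only at h
    rcases lt_max_iff.1 h with h' | h'
    · exact absurd h' (lt_irrefl 0)
    · linarith
  have hcomono : ∀ i j i' j' : Fin w, 0 < f i j → 0 < f i' j' →
      (↑i' : ℕ) < ↑i → (↑j' : ℕ) ≤ ↑j := by
    intro i j i' j' h h' hii
    have k1 := hpos i j h
    have k2 := hpos i' j' h'
    have c1 : B ↑j' < A (↑i' + 1) :=
      lt_of_le_of_lt (le_max_right _ _) (lt_of_lt_of_le k2 (min_le_left _ _))
    have c2 : A ↑i ≤ max (A ↑i) (B ↑j) := le_max_left _ _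
    have c3 : max (A ↑i) (B ↑j) < B (↑j + 1) :=
      lt_of_lt_of_le k1 (min_le_right _ _)
    have c4 : A (↑i' + 1) ≤ A ↑i := hA_mono hii
    have : B ↑j' < B (↑j + 1) := by linarith
    by_contra hjj
    push_neg at hjj
    exact absurd (hB_mono (show (↑j : ℕ) + 1 ≤ ↑j' from hjj)) (not_le.2 this)
  refine ⟨f, hf0, hfrow, hfcol, ?_⟩
  -- sign lemma
  have hsign : ∀ x : ℝ, (∀ i j, 0 ≤ f i j * stepd (t i) (t j) x)
      ∨ (∀ i j, f i j * stepd (t i) (t j) x ≤ 0) := by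
    intro x
    by_contra hc
    push_neg at hc
    obtain ⟨⟨i, j, h₁⟩, ⟨i', j', h₂⟩⟩ := hc
    have hfij : 0 < f i j := by
      rcases (hf0 i j).eq_or_lt with h | h
      · rw [← h, zero_mul] at h₁; exact absurd h₁ (lt_irrefl 0)
      · exact h
    have hfij' : 0 < f i' j' := by
      rcases (hf0 i' j').eq_or_lt with h | h
      · rw [← h, zero_mul] at h₂; exact absurd h₂ (lt_irrefl 0)
      · exact h
    have hs₁ : stepd (t i) (t j) x < 0 := by
      by_contra hs; push_neg at hs
      exact absurd (mul_nonneg (hf0 i j) hs) (not_le.2 h₁)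
    have hs₂ : 0 < stepd (t i') (t j') x := by
      by_contra hs; push_neg at hs
      have : f i' j' * stepd (t i') (t j') x ≤ 0 :=
        mul_nonpos_of_nonneg_of_nonpos (hf0 i' j') hs
      exact absurd h₂ (not_lt.2 this)
    rw [stepd] at hs₁ hs₂
    have hti : ¬ t i ≤ x := by
      intro h; rw [if_pos h] at hs₁
      split_ifs at hs₁ <;> linarith
    have htj : t j ≤ x := by
      by_contra h; rw [if_neg h] at hs₁
      split_ifs at hs₁ <;> linarith
    have hti' : t i' ≤ x := by
      by_contra h; rw [if_neg h] at hs₂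
      split_ifs at hs₂ <;> linarith
    have htj' : ¬ t j' ≤ x := by
      intro h; rw [if_pos h] at hs₂
      split_ifs at hs₂ <;> linarith
    have hii : (↑i' : ℕ) < ↑i := by
      by_contra h; push_neg at h
      exact hti ((ht (Fin.le_def.2 h)).trans hti')
    have hjj : (↑j : ℕ) < ↑j' := by
      by_contra h; push_neg at h
      exact htj' ((ht (Fin.le_def.2 h)).trans htj)
    have := hcomono i j i' j' hfij hfij' hii
    omega
  have key : ∑ i, ∑ j, |t i - t j| * f i j
      = ∫ x, ∑ i, ∑ j, f i j * |stepd (t i) (t j) x| := by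
    rw [integral_finset_sum _ (fun i _ => integrable_finset_sum _
      (fun j _ => ((stepd_integrable (t i) (t j)).abs.const_mul _)))]
    apply Finset.sum_congr rfl; intro i _
    rw [integral_finset_sum _ (fun j _ => ((stepd_integrable (t i) (t j)).abs.const_mul _))]
    apply Finset.sum_congr rfl; intro j _
    rw [integral_const_mul, stepd_abs_integral, mul_comm]
  rw [key]
  congr 1
  funext x
  have h1 : ∀ i j : Fin w, f i j * |stepd (t i) (t j) x| = |f i j * stepd (t i) (t j) x| :=
    fun i j => by rw [abs_mul, abs_of_nonneg (hf0 i j)]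
  rw [Finset.sum_congr rfl fun i _ => Finset.sum_congr rfl fun j _ => h1 i j,
    abs_sum_sum_eq _ (hsign x), ← cdf_diff_eq t p q f hfrow hfcol x]

lemma exists_optimal {w : ℕ} (t p q : Fin w → ℝ)
    (hp : ∀ i, 0 ≤ p i) (hq : ∀ i, 0 ≤ q i)
    (hps : ∑ i, p i = 1) (hqs : ∑ i, q i = 1) :
    ∃ ν : Fin w → Fin w → ℝ,
      (∀ i j, 0 ≤ ν i j) ∧ (∀ i, ∑ j, ν i j = p i) ∧ (∀ j, ∑ i, ν i j = q j) ∧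
      ∑ i, ∑ j, |t i - t j| * ν i j
        = ∫ x, |(∑ i, if t i ≤ x then p i else 0) - (∑ i, if t i ≤ x then q i else 0)| := by
  classical
  set σ := Tuple.sort t with hσ_def
  have ht' : Monotone (fun i => t (σ i)) := Tuple.monotone_sort t
  obtain ⟨f, hf0, hfrow, hfcol, hfcost⟩ :=
    exists_optimal_sorted (fun i => t (σ i)) (fun i => p (σ i)) (fun i => q (σ i)) ht'
      (fun i => hp _) (fun i => hq _)
      (by rw [Equiv.sum_comp σ p, hps]) (by rw [Equiv.sum_comp σ q, hqs])
  refine ⟨fun i j => f (σ.symm i) (σ.symm j), fun i j => hf0 _ _, ?_, ?_, ?_⟩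
  · intro i
    rw [Equiv.sum_comp σ.symm (fun j => f (σ.symm i) j)]
    have := hfrow (σ.symm i)
    simpa [Equiv.apply_symm_apply] using this
  · intro j
    rw [Equiv.sum_comp σ.symm (fun i => f i (σ.symm j))]
    have := hfcol (σ.symm j)
    simpa [Equiv.apply_symm_apply] using this
  · have hre : ∑ i, ∑ j, |t i - t j| * f (σ.symm i) (σ.symm j)
        = ∑ i, ∑ j, |t (σ i) - t (σ j)| * f i j := by
      rw [← Equiv.sum_comp σ (fun i => ∑ j, |t i - t j| * f (σ.symm i) (σ.symm j))]
      apply Finset.sum_congr rfl; intro i _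
      rw [← Equiv.sum_comp σ (fun j => |t (σ i) - t j| * f (σ.symm (σ i)) (σ.symm j))]
      apply Finset.sum_congr rfl; intro j _
      simp [Equiv.symm_apply_apply]
    rw [hre, hfcost]
    congr 1
    funext x
    congr 1
    congr 1
    · exact Equiv.sum_comp σ (fun i => if t i ≤ x then p i else 0)
    · exact Equiv.sum_comp σ (fun i => if t i ≤ x then q i else 0)


/-- The Wasserstein-1 distance between two finitely-supported probability measures
on the real line equals the L¹ distance between their cumulative distribution
functions. -/
theorem wasserstein_line_eq_cdf_l1
    (w : ℕ) (t : Fin w → ℝ) (p q : Fin w → ℝ)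
    (hp : ∀ i, 0 ≤ p i) (hq : ∀ i, 0 ≤ q i)
    (hps : ∑ i, p i = 1) (hqs : ∑ i, q i = 1) :
    IsGLB
      {c : ℝ | ∃ ν : Fin w → Fin w → ℝ,
        (∀ i j, 0 ≤ ν i j) ∧
        (∀ i, ∑ j, ν i j = p i) ∧
        (∀ j, ∑ i, ν i j = q j) ∧
        c = ∑ i, ∑ j, |t i - t j| * ν i j}
      (∫ x, |(∑ i, if t i ≤ x then p i else 0) - (∑ i, if t i ≤ x then q i else 0)|) := by
  obtain ⟨ν, h0, h1, h2, hc⟩ := exists_optimal t p q hp hq hps hqs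
  refine IsLeast.isGLB ⟨⟨ν, h0, h1, h2, hc.symm⟩, ?_⟩
  rintro c ⟨ν', h0', h1', h2', rfl⟩
  exact cost_ge t p q ν' h0' h1' h2'
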